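/- Let n ≥ 1, a₁, …, a_r ∈ ℤ, K₁, …, K_r ∈ ℤ \ {0}, with Σ_i a_i^t / K_i = 0 for t = 0, …, n−1. If some value s occurs exactly once among a₁, …, a_r (i.e. the a_i are 'somewhere injective' at s), then r ≥ n+1. -/

import Mathlib

open Finset Polynomial

theorem stmt5 (n r : ℕ) (hn : 1 ≤ n) (a : Fin r → ℤ) (K : Fin r → ℤ)
    (hK : ∀ i, K i ≠ 0)
    (h : ∀ t : ℕ, t ≤ n - 1 → ∑ i, ((a i : ℤ) : ℚ) ^ t / (K i : ℚ) = 0)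
    (hs : ∃ s : ℤ, (Finset.univ.filter (fun i => a i = s)).card = 1) :
    r ≥ n + 1 := by
  by_contra hlt
  push_neg at hlt
  have hrn : r ≤ n := Nat.lt_succ_iff.mp hlt
  obtain ⟨s, hcard⟩ := hs
  obtain ⟨i0, hi0⟩ := Finset.card_eq_one.mp hcard
  have ha0 : a i0 = s := by
    have : i0 ∈ Finset.univ.filter (fun i => a i = s) := by
      rw [hi0]; exact Finset.mem_singleton_self i0
    exact (Finset.mem_filter.mp this).2
  have hne : ∀ i, i ≠ i0 → a i ≠ s := by
    intro i hii hai
    have : i ∈ Finset.univ.filter (fun i => a i = s) := by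
      simp [hai]
    rw [hi0, Finset.mem_singleton] at this
    exact hii this
  set T : Finset (Fin r) := Finset.univ.filter (fun i => ¬ a i = s) with hT
  have hcardT : T.card = r - 1 := by
    have := Finset.card_filter_add_card_filter_not
      (s := (Finset.univ : Finset (Fin r))) (p := fun i => a i = s)
    have h2 : 1 + (Finset.univ.filter (fun i => ¬ a i = s)).card = r := by
      simpa [hcard] using this
    rw [hT]
    omega
  set Q : Polynomial ℚ := ∏ i ∈ T, (X - C ((a i : ℚ))) with hQ
  have hdegQ : Q.natDegree ≤ n - 1 := by
    rw [hQ, Polynomial.natDegree_prod_of_monic _ _ (fun i _ => Polynomial.monic_X_sub_C _)]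
    simp only [Polynomial.natDegree_X_sub_C, Finset.sum_const, smul_eq_mul, mul_one]
    rw [hcardT]
    omega
  -- expand eval as sum of monomials
  have hsum0 : ∑ i, Q.eval ((a i : ℚ)) / (K i : ℚ) = 0 := by
    have hev : ∀ x : ℚ, Q.eval x = ∑ t ∈ Finset.range n, Q.coeff t * x ^ t := by
      intro x
      rw [Polynomial.eval_eq_sum_range' (n := n) (by omega)]
    calc ∑ i, Q.eval ((a i : ℚ)) / (K i : ℚ)
        = ∑ i, ∑ t ∈ Finset.range n, Q.coeff t * (((a i : ℤ) : ℚ) ^ t / (K i : ℚ)) := by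
          refine Finset.sum_congr rfl fun i _ => ?_
          rw [hev, Finset.sum_div]
          refine Finset.sum_congr rfl fun t _ => ?_
          ring
      _ = ∑ t ∈ Finset.range n, Q.coeff t * ∑ i, ((a i : ℤ) : ℚ) ^ t / (K i : ℚ) := by
          rw [Finset.sum_comm]
          refine Finset.sum_congr rfl fun t _ => ?_
          rw [Finset.mul_sum]
      _ = 0 := by
          refine Finset.sum_eq_zero fun t ht => ?_
          rw [h t (by have := Finset.mem_range.mp ht; omega), mul_zero]
  -- but the sum equals Q.eval s / K i0
  have hzero : ∀ i, i ≠ i0 → Q.eval ((a i : ℚ)) = 0 := by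
    intro i hii
    rw [hQ, Polynomial.eval_prod]
    refine Finset.prod_eq_zero (i := i) ?_ ?_
    · simp [hT, hne i hii]
    · simp
  have hsum1 : ∑ i, Q.eval ((a i : ℚ)) / (K i : ℚ) = Q.eval ((s : ℚ)) / (K i0 : ℚ) := by
    rw [Finset.sum_eq_single i0]
    · rw [ha0]
    · intro i _ hii
      rw [hzero i hii, zero_div]
    · intro hmem; exact absurd (Finset.mem_univ i0) hmem
  have hQs : Q.eval ((s : ℚ)) ≠ 0 := by
    rw [hQ, Polynomial.eval_prod]
    refine Finset.prod_ne_zero_iff.mpr fun i hi => ?_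
    have : a i ≠ s := (Finset.mem_filter.mp hi).2
    simp only [Polynomial.eval_sub, Polynomial.eval_X, Polynomial.eval_C, sub_ne_zero]
    exact_mod_cast fun hc => this (by exact_mod_cast hc.symm)
  rw [hsum1] at hsum0
  have : (K i0 : ℚ) ≠ 0 := Int.cast_ne_zero.mpr (hK i0)
  exact hQs (by field_simp at hsum0; simpa using hsum0)
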